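/- Let V₃ be 3-dimensional with fixed θ ∈ ∧³V₃* nonzero, and let q ∈ Sym²V₃ be a symmetric tensor of rank 1. Then the Lie algebra structure on V₃ defined by the bracket corresponding to q is isomorphic to the Heisenberg algebra he₃. -/

import Mathlib

open Matrix

lemma aux_zero (v x : Fin 3 → ℂ) :
    (Matrix.vecMulVec v v).mulVec (crossProduct x v) = 0 := by
  funext i
  simp [Matrix.mulVec, Matrix.vecMulVec, crossProduct, dotProduct, Fin.sum_univ_three]
  ring

lemma aux_basis (v X Y : Fin 3 → ℂ)
    (hXY : (Matrix.vecMulVec v v).mulVec (crossProduct X Y) = v)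
    (hli : LinearIndependent ℂ ![X, Y, v]) :
    ∃ B : Module.Basis (Fin 3) ℂ (Fin 3 → ℂ),
      (Matrix.vecMulVec v v).mulVec (crossProduct (B 0) (B 1)) = B 2 ∧
      (Matrix.vecMulVec v v).mulVec (crossProduct (B 0) (B 2)) = 0 ∧
      (Matrix.vecMulVec v v).mulVec (crossProduct (B 1) (B 2)) = 0 := by
  have hcard : Fintype.card (Fin 3) = Module.finrank ℂ (Fin 3 → ℂ) := by simp
  refine ⟨basisOfLinearIndependentOfCardEqFinrank hli hcard, ?_⟩
  rw [coe_basisOfLinearIndependentOfCardEqFinrank]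
  refine ⟨?_, ?_, ?_⟩ <;>
    simp only [Matrix.cons_val_zero, Matrix.cons_val_one, Matrix.head_cons,
      Matrix.cons_val_two, Matrix.tail_cons]
  · exact hXY
  · exact aux_zero v X
  · exact aux_zero v Y

/-- If q = v ⊗ v is a rank one symmetric tensor (v ≠ 0) on V₃ = ℂ³, the Lie algebra with
bracket b x y = (v⊗v)(x×y) is isomorphic to the Heisenberg algebra he₃: it admits a
basis X, Y, Z with b X Y = Z, b X Z = 0, b Y Z = 0. -/
theorem stmt16 (v : Fin 3 → ℂ) (hv : v ≠ 0) :
    let b : (Fin 3 → ℂ) → (Fin 3 → ℂ) → (Fin 3 → ℂ) := fun x y =>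
      (Matrix.vecMulVec v v).mulVec (crossProduct x y)
    ∃ B : Module.Basis (Fin 3) ℂ (Fin 3 → ℂ),
      b (B 0) (B 1) = B 2 ∧ b (B 0) (B 2) = 0 ∧ b (B 1) (B 2) = 0 := by
  intro b
  obtain ⟨i, hi⟩ := Function.ne_iff.mp hv
  simp only [Pi.zero_apply] at hi
  fin_cases i
  · have hi' : v 0 ≠ 0 := hi
    exact aux_basis v ![0,1,0] ((v 0)⁻¹ • ![0,0,1])
      (by funext j; fin_cases j <;>
        simp [Matrix.mulVec, Matrix.vecMulVec, crossProduct, dotProduct,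
          Fin.sum_univ_three, mul_inv_cancel_right₀ hi'])
      (by
        have : LinearIndependent ℂ (Matrix.of ![![0,1,0], (v 0)⁻¹ • ![0,0,1], v]).row := by
          rw [Matrix.linearIndependent_rows_iff_isUnit, Matrix.isUnit_iff_isUnit_det,
            isUnit_iff_ne_zero]
          simp [Matrix.det_fin_three, hi', inv_ne_zero]
        exact this)
  · have hi' : v 1 ≠ 0 := hi
    exact aux_basis v ![0,0,1] ((v 1)⁻¹ • ![1,0,0])
      (by funext j; fin_cases j <;>
        simp [Matrix.mulVec, Matrix.vecMulVec, crossProduct, dotProduct,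
          Fin.sum_univ_three, mul_inv_cancel_right₀ hi'])
      (by
        have : LinearIndependent ℂ (Matrix.of ![![0,0,1], (v 1)⁻¹ • ![1,0,0], v]).row := by
          rw [Matrix.linearIndependent_rows_iff_isUnit, Matrix.isUnit_iff_isUnit_det,
            isUnit_iff_ne_zero]
          simp [Matrix.det_fin_three, hi', inv_ne_zero]
        exact this)
  · have hi' : v 2 ≠ 0 := hi
    exact aux_basis v ![1,0,0] ((v 2)⁻¹ • ![0,1,0])
      (by funext j; fin_cases j <;>
        simp [Matrix.mulVec, Matrix.vecMulVec, crossProduct, dotProduct,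
          Fin.sum_univ_three, mul_inv_cancel_right₀ hi'])
      (by
        have : LinearIndependent ℂ (Matrix.of ![![1,0,0], (v 2)⁻¹ • ![0,1,0], v]).row := by
          rw [Matrix.linearIndependent_rows_iff_isUnit, Matrix.isUnit_iff_isUnit_det,
            isUnit_iff_ne_zero]
          simp [Matrix.det_fin_three, hi', inv_ne_zero]
        exact this)
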